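/- For 0 < q < 1 and any complex number a, the power series E_q(z) = Σ_{k≥0} q^{k(k-1)/2}/(q;q)_k · z^k converges at z = a and equals the infinite product (-a;q)_∞ = Π_{k≥0}(1 + q^k a). -/

import Mathlib

open scoped BigOperators

open Filter Finset

namespace EqAux

/-- `P q n k = ∏_{j<k} (1 - q^(n-j))` (ℕ-subtraction in the exponent). -/
noncomputable def P (q : ℝ) (n k : ℕ) : ℝ := ∏ j ∈ Finset.range k, (1 - q ^ (n - j))

/-- `D q k = (q;q)_k`. -/
noncomputable def D (q : ℝ) (k : ℕ) : ℝ := ∏ j ∈ Finset.range k, (1 - q ^ (j + 1))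

noncomputable def c (q : ℝ) (n k : ℕ) : ℝ := q ^ (k * (k - 1) / 2) * P q n k / D q k

variable {q : ℝ}

lemma D_pos (hq0 : 0 < q) (hq1 : q < 1) (k : ℕ) : 0 < D q k := by
  refine Finset.prod_pos fun j _ => ?_
  have : q ^ (j + 1) < 1 := pow_lt_one₀ hq0.le hq1 (Nat.succ_ne_zero j)
  linarith

lemma D_succ (k : ℕ) : D q (k + 1) = D q k * (1 - q ^ (k + 1)) :=
  Finset.prod_range_succ _ _

lemma P_zero (n : ℕ) : P q n 0 = 1 := by simp [P]

lemma P_succ (n m : ℕ) : P q n (m + 1) = P q n m * (1 - q ^ (n - m)) :=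
  Finset.prod_range_succ _ _

lemma P_succ_succ (n m : ℕ) : P q (n + 1) (m + 1) = (1 - q ^ (n + 1)) * P q n m := by
  rw [P, Finset.prod_range_succ']
  simp only [Nat.succ_sub_succ, Nat.sub_zero]
  rw [mul_comm]
  rfl

lemma P_of_lt (n k : ℕ) (h : n < k) : P q n k = 0 := by
  refine Finset.prod_eq_zero (Finset.mem_range.2 h) ?_
  simp [Nat.sub_self]

lemma P_nonneg (hq0 : 0 < q) (hq1 : q < 1) (n k : ℕ) : 0 ≤ P q n k := by
  refine Finset.prod_nonneg fun j _ => ?_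
  have : q ^ (n - j) ≤ 1 := pow_le_one₀ hq0.le hq1.le
  linarith

lemma P_le_one (hq0 : 0 < q) (hq1 : q < 1) (n k : ℕ) : P q n k ≤ 1 := by
  refine Finset.prod_le_one (fun j _ => ?_) (fun j _ => ?_)
  · have : q ^ (n - j) ≤ 1 := pow_le_one₀ hq0.le hq1.le
    linarith
  · have : 0 ≤ q ^ (n - j) := pow_nonneg hq0.le _
    linarith

lemma Pkey (n m : ℕ) :
    q ^ m * P q (n + 1) (m + 1) = q ^ m * P q n (m + 1) + q ^ n * (1 - q ^ (m + 1)) * P q n m := by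
  rw [P_succ_succ, P_succ]
  rcases le_or_gt m n with h | h
  · have hq : q ^ m * q ^ (n - m) = q ^ n := by
      rw [← pow_add, Nat.add_sub_cancel' h]
    linear_combination (P q n m) * hq
  · rw [P_of_lt n m h]
    ring

lemma ekey (m : ℕ) : (m + 1) * ((m + 1) - 1) / 2 = m * (m - 1) / 2 + m := by
  rcases m with _ | m
  · rfl
  · have : (m + 2) * (m + 1) = (m + 1) * m + 2 * (m + 1) := by ring
    simp only [Nat.succ_sub_one]
    rw [this, Nat.add_mul_div_left _ _ (by norm_num : (0:ℕ) < 2)]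

lemma c_rec (hq0 : 0 < q) (hq1 : q < 1) (n m : ℕ) :
    c q (n + 1) (m + 1) = c q n (m + 1) + q ^ n * c q n m := by
  have hDm : D q m ≠ 0 := (D_pos hq0 hq1 m).ne'
  have h1 : (1 : ℝ) - q ^ (m + 1) ≠ 0 := by
    have : q ^ (m + 1) < 1 := pow_lt_one₀ hq0.le hq1 (Nat.succ_ne_zero m)
    linarith
  have key := Pkey (q := q) n m
  apply mul_right_cancel₀ (mul_ne_zero hDm h1)
  have e1 : c q (n + 1) (m + 1) * (D q m * (1 - q ^ (m + 1)))
      = q ^ (m * (m - 1) / 2 + m) * P q (n + 1) (m + 1) := by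
    rw [c, ekey, ← D_succ, div_mul_cancel₀ _ (D_pos hq0 hq1 (m + 1)).ne']
  have e2 : c q n (m + 1) * (D q m * (1 - q ^ (m + 1)))
      = q ^ (m * (m - 1) / 2 + m) * P q n (m + 1) := by
    rw [c, ekey, ← D_succ, div_mul_cancel₀ _ (D_pos hq0 hq1 (m + 1)).ne']
  have e3 : c q n m * D q m = q ^ (m * (m - 1) / 2) * P q n m := by
    rw [c, div_mul_cancel₀ _ hDm]
  linear_combination e1 - e2 - (q ^ n * (1 - q ^ (m + 1))) * e3 + q ^ (m * (m - 1) / 2) * key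


lemma c_zero_left (n : ℕ) : c q n 0 = 1 := by simp [c, P, D]

lemma c_of_lt (n k : ℕ) (h : n < k) : c q n k = 0 := by
  simp [c, P_of_lt n k h]

lemma c_nonneg (hq0 : 0 < q) (hq1 : q < 1) (n k : ℕ) : 0 ≤ c q n k :=
  div_nonneg (mul_nonneg (pow_nonneg hq0.le _) (P_nonneg hq0 hq1 n k)) (D_pos hq0 hq1 k).le

lemma c_le (hq0 : 0 < q) (hq1 : q < 1) (n k : ℕ) :
    c q n k ≤ q ^ (k * (k - 1) / 2) / D q k := by
  rw [c, div_le_div_iff_of_pos_right (D_pos hq0 hq1 k)]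
  exact mul_le_of_le_one_right (pow_nonneg hq0.le _) (P_le_one hq0 hq1 n k)

/-- The finite q-binomial identity. -/
lemma FI (hq0 : 0 < q) (hq1 : q < 1) (a : ℂ) (n : ℕ) :
    ∏ j ∈ Finset.range n, (1 + (q : ℂ) ^ j * a)
      = ∑ k ∈ Finset.range (n + 1), ((c q n k : ℝ) : ℂ) * a ^ k := by
  induction n with
  | zero => simp [c, P, D]
  | succ n ih =>
    rw [Finset.prod_range_succ, ih]
    rw [Finset.sum_range_succ' (fun k => ((c q (n + 1) k : ℝ) : ℂ) * a ^ k) (n + 1)]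
    have expand : ∑ i ∈ Finset.range (n + 1), ((c q (n + 1) (i + 1) : ℝ) : ℂ) * a ^ (i + 1)
        = ∑ i ∈ Finset.range (n + 1), ((c q n (i + 1) : ℝ) : ℂ) * a ^ (i + 1)
          + ∑ i ∈ Finset.range (n + 1), (((c q n i : ℝ) : ℂ) * a ^ i) * ((q : ℂ) ^ n * a) := by
      rw [← Finset.sum_add_distrib]
      refine Finset.sum_congr rfl fun i _ => ?_
      rw [c_rec hq0 hq1]
      push_cast
      ring
    have first : ∑ i ∈ Finset.range (n + 1), ((c q n (i + 1) : ℝ) : ℂ) * a ^ (i + 1)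
          + ((c q (n + 1) 0 : ℝ) : ℂ) * a ^ 0
        = ∑ i ∈ Finset.range (n + 1), ((c q n i : ℝ) : ℂ) * a ^ i := by
      rw [c_zero_left, ← c_zero_left (q := q) n,
        ← Finset.sum_range_succ' (fun k => ((c q n k : ℝ) : ℂ) * a ^ k) (n + 1),
        Finset.sum_range_succ]
      simp [c_of_lt n (n + 1) (Nat.lt_succ_self n)]
    rw [expand, add_right_comm, first, mul_add, mul_one, Finset.sum_mul]

end EqAux

open EqAux Filter Topology

/-- For `0 < q < 1` and any complex `a`, the series
`E_q(a) = ∑ₖ q^{k(k-1)/2}/(q;q)_k · a^k` converges with sum equal to the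
(convergent) infinite product `(-a;q)_∞ = ∏ₖ (1 + qᵏ a)`. -/
theorem Eq_series_eq_product (q : ℝ) (hq0 : 0 < q) (hq1 : q < 1) (a : ℂ) :
    Multipliable (fun k : ℕ => 1 + (q : ℂ) ^ k * a) ∧
    HasSum
      (fun k : ℕ =>
        (((q ^ (k * (k - 1) / 2) / ∏ j ∈ Finset.range k, (1 - q ^ (j + 1))) : ℝ) : ℂ) * a ^ k)
      (∏' k : ℕ, (1 + (q : ℂ) ^ k * a)) := by
  have hqpow : Tendsto (fun k : ℕ => q ^ k) atTop (𝓝 0) :=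
    tendsto_pow_atTop_nhds_zero_of_lt_one hq0.le hq1
  set g : ℕ → ℂ := fun k =>
    (((q ^ (k * (k - 1) / 2) / ∏ j ∈ Finset.range k, (1 - q ^ (j + 1))) : ℝ) : ℂ) * a ^ k with hg
  set F : ℕ → ℕ → ℂ := fun n k => ((c q n k : ℝ) : ℂ) * a ^ k with hF
  set bound : ℕ → ℝ := fun k => q ^ (k * (k - 1) / 2) * (‖a‖ + 1) ^ k / D q k with hbd
  have hDpos := D_pos hq0 hq1 (q := q)
  have hbpos : ∀ k, 0 < bound k := fun k => by
    have := hDpos k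
    have hA : (0:ℝ) < ‖a‖ + 1 := by positivity
    positivity
  -- summability of the bound, by the ratio test
  have hbound_sum : Summable bound := by
    have h1ne : ∀ k : ℕ, (1 : ℝ) - q ^ (k + 1) ≠ 0 := fun k => by
      have : q ^ (k + 1) < 1 := pow_lt_one₀ hq0.le hq1 (Nat.succ_ne_zero k)
      linarith
    refine summable_of_ratio_test_tendsto_lt_one (l := 0) one_pos
      (Eventually.of_forall fun k => (hbpos k).ne') ?_
    have hration : ∀ k : ℕ, ‖bound (k + 1)‖ / ‖bound k‖ = q ^ k * (‖a‖ + 1) / (1 - q ^ (k + 1)) := by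
      intro k
      have hstep : bound (k + 1) = bound k * (q ^ k * (‖a‖ + 1) / (1 - q ^ (k + 1))) := by
        rw [hbd]
        simp only [ekey, D_succ, pow_add]
        have hD := (hDpos k).ne'
        have h1 := h1ne k
        field_simp
      rw [Real.norm_of_nonneg (hbpos _).le, Real.norm_of_nonneg (hbpos k).le, hstep,
        mul_comm, mul_div_assoc, div_self (hbpos k).ne', mul_one]
    have h1 : Tendsto (fun k : ℕ => q ^ k * (‖a‖ + 1)) atTop (𝓝 0) := by
      simpa using hqpow.mul_const (‖a‖ + 1)
    have h2 : Tendsto (fun k : ℕ => 1 - q ^ (k + 1)) atTop (𝓝 1) := by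
      have := hqpow.comp (tendsto_add_atTop_nat 1)
      have h2 : Tendsto (fun _ : ℕ => (1:ℝ)) atTop (𝓝 1) := tendsto_const_nhds
      simpa using h2.sub this
    have := h1.div h2 one_ne_zero
    simp only [zero_div] at this
    exact Tendsto.congr (fun k => (hration k).symm) this
  -- the uniform bound
  have hnormF : ∀ n k, ‖F n k‖ ≤ bound k := by
    intro n k
    rw [hF]
    simp only [norm_mul, norm_pow, Complex.norm_real, Real.norm_eq_abs,
      abs_of_nonneg (c_nonneg hq0 hq1 n k)]
    have h1 : c q n k ≤ q ^ (k * (k - 1) / 2) / D q k := c_le hq0 hq1 n k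
    have h2 : ‖a‖ ^ k ≤ (‖a‖ + 1) ^ k := pow_le_pow_left₀ (norm_nonneg a) (by linarith) k
    have h3 : c q n k * ‖a‖ ^ k ≤ (q ^ (k * (k - 1) / 2) / D q k) * (‖a‖ + 1) ^ k :=
      mul_le_mul h1 h2 (pow_nonneg (norm_nonneg a) k)
        (div_nonneg (pow_nonneg hq0.le _) (hDpos k).le)
    calc c q n k * ‖a‖ ^ k ≤ (q ^ (k * (k - 1) / 2) / D q k) * (‖a‖ + 1) ^ k := h3
      _ = bound k := by rw [hbd]; ring
  -- pointwise convergence of the coefficients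
  have hab : ∀ k, Tendsto (fun n => F n k) atTop (𝓝 (g k)) := by
    intro k
    have hP : Tendsto (fun n => P q n k) atTop (𝓝 1) := by
      have := tendsto_finset_prod (f := fun (j : ℕ) (n : ℕ) => 1 - q ^ (n - j))
        (x := atTop) (a := fun _ => (1:ℝ)) (Finset.range k) (fun j _ => by
          have := hqpow.comp (tendsto_sub_atTop_nat j)
          have h2 : Tendsto (fun _ : ℕ => (1:ℝ)) atTop (𝓝 1) := tendsto_const_nhds
          simpa using h2.sub this)
      simpa [P] using this
    have hc : Tendsto (fun n => c q n k) atTop (𝓝 (q ^ (k * (k - 1) / 2) / D q k)) := by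
      have := (hP.const_mul (q ^ (k * (k - 1) / 2))).div_const (D q k)
      simpa [c] using this
    have hval : ((q ^ (k * (k - 1) / 2) / D q k : ℝ) : ℂ) * a ^ k = g k := by
      simp only [hg]
      rfl
    have := ((Complex.continuous_ofReal.tendsto _).comp hc).mul_const (a ^ k)
    rw [← hval]
    simpa [hF, Function.comp] using this
  -- Tannery
  have htsum : ∀ n, (∑' k, F n k) = ∏ j ∈ Finset.range n, (1 + (q : ℂ) ^ j * a) := by
    intro n
    rw [tsum_eq_sum (s := Finset.range (n + 1)) (fun k hk => by
      have hnk : n < k := by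
        have : ¬ k < n + 1 := fun h => hk (Finset.mem_range.2 h)
        omega
      simp [hF, c_of_lt n k hnk])]
    exact (FI hq0 hq1 a n).symm
  have htan : Tendsto (fun n => ∑' k, F n k) atTop (𝓝 (∑' k, g k)) :=
    tendsto_tsum_of_dominated_convergence hbound_sum hab (Eventually.of_forall hnormF)
  have hprod_tendsto :
      Tendsto (fun n => ∏ j ∈ Finset.range n, (1 + (q : ℂ) ^ j * a)) atTop (𝓝 (∑' k, g k)) :=
    htan.congr htsum
  -- Multipliability
  have hM : Multipliable (fun k : ℕ => 1 + (q : ℂ) ^ k * a) := by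
    have hnorm : ∀ k : ℕ, ‖(q : ℂ) ^ k * a‖ = q ^ k * ‖a‖ := fun k => by
      simp [norm_mul, norm_pow, Complex.norm_real, Real.norm_eq_abs, abs_of_pos hq0]
    by_cases hz : ∀ k : ℕ, 1 + (q : ℂ) ^ k * a ≠ 0
    · refine Complex.multipliable_of_summable_log ?_
      refine Summable.of_norm_bounded_eventually (g := fun k => 3 / 2 * (q ^ k * ‖a‖))
        (((summable_geometric_of_lt_one hq0.le hq1).mul_right ‖a‖).mul_left _) ?_
      rw [Nat.cofinite_eq_atTop]
      have hsmall : ∀ᶠ k : ℕ in atTop, q ^ k * ‖a‖ ≤ 1 / 2 :=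
        (hqpow.mul_const ‖a‖).eventually (eventually_le_nhds
          (show (0:ℝ) * ‖a‖ < 1/2 by rw [zero_mul]; norm_num))
      filter_upwards [hsmall] with k hk
      have := Complex.norm_log_one_add_half_le_self (z := (q : ℂ) ^ k * a)
        (by rw [hnorm k]; exact hk)
      rwa [hnorm k] at this
    · push_neg at hz
      obtain ⟨k0, hk0⟩ := hz
      refine ⟨0, ?_⟩
      rw [HasProd]
      refine tendsto_const_nhds.congr' ?_
      filter_upwards [eventually_ge_atTop ({k0} : Finset ℕ)] with s hs
      exact (Finset.prod_eq_zero (Finset.singleton_subset_iff.mp hs) hk0).symm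
  -- conclude
  have heq : (∏' k : ℕ, (1 + (q : ℂ) ^ k * a)) = ∑' k, g k :=
    tendsto_nhds_unique hM.hasProd.tendsto_prod_nat hprod_tendsto
  have hgsum : Summable g := by
    refine Summable.of_norm_bounded (g := bound) hbound_sum fun k => ?_
    rw [hg]
    simp only [norm_mul, norm_pow, Complex.norm_real, Real.norm_eq_abs]
    have hDd : (∏ j ∈ Finset.range k, (1 - q ^ (j + 1))) = D q k := rfl
    rw [hDd]
    have h1 : |q ^ (k * (k - 1) / 2) / D q k| = q ^ (k * (k - 1) / 2) / D q k :=
      abs_of_nonneg (div_nonneg (pow_nonneg hq0.le _) (hDpos k).le)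
    rw [h1]
    have h2 : ‖a‖ ^ k ≤ (‖a‖ + 1) ^ k := pow_le_pow_left₀ (norm_nonneg a) (by linarith) k
    calc (q ^ (k * (k - 1) / 2) / D q k) * ‖a‖ ^ k
        ≤ (q ^ (k * (k - 1) / 2) / D q k) * (‖a‖ + 1) ^ k := by
          exact mul_le_mul_of_nonneg_left h2
            (div_nonneg (pow_nonneg hq0.le _) (hDpos k).le)
      _ = bound k := by rw [hbd]; ring
  refine ⟨hM, ?_⟩
  rw [heq]
  exact hgsum.hasSum
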